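/- Let d ≥ 1 be an integer, P₀ > 0, and 0 < M₁ < 1/2. Suppose U is continuously differentiable on (0,∞) with |U(r)| ≤ M₁ r²/(1+r)³ and |U'(r)| ≤ M₁ r/(1+r)³ for all r > 0. Set M₀ := dM₁/(1 − 2M₁), V(r) := ∫₀^r (U'(s) + (d−1)U(s)/s)/(s/2 − U(s)) ds, and P(r) := P₀ e^{V(r)}. Then for every r > 0: |V(r)| ≤ M₀, e^{−M₀} P₀ ≤ P(r) ≤ e^{M₀} P₀, and |P'(r)| ≤ 2M₀ e^{M₀} P₀/(1+r)³. -/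

import Mathlib

open Real MeasureTheory Filter Asymptotics Set
open scoped Topology

noncomputable section

/-- `V(r) = ∫₀^r (U'(s) + (d−1)U(s)/s)/(s/2 − U(s)) ds`. -/
def Vint (d : ℕ) (U : ℝ → ℝ) (r : ℝ) : ℝ :=
  ∫ s in (0:ℝ)..r, (deriv U s + ((d : ℝ) - 1) * U s / s) / (s / 2 - U s)

/-- `P(r) = P₀ e^{V(r)}`. -/
def Pfun (d : ℕ) (P0 : ℝ) (U : ℝ → ℝ) (r : ℝ) : ℝ :=
  P0 * Real.exp (Vint d U r)

section aux

variable {d : ℕ} {M1 : ℝ} {U : ℝ → ℝ}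

/-- the integrand -/
private def fInt (d : ℕ) (U : ℝ → ℝ) (s : ℝ) : ℝ :=
  (deriv U s + ((d : ℝ) - 1) * U s / s) / (s / 2 - U s)

private lemma denom_pos (hM1 : 0 < M1) (hM1' : M1 < 1/2)
    (hUb : ∀ r > 0, |U r| ≤ M1 * r ^ 2 / (1 + r) ^ 3 ∧
                    |deriv U r| ≤ M1 * r / (1 + r) ^ 3)
    {s : ℝ} (hs : 0 < s) : s * (1 - 2 * M1) / 2 ≤ s / 2 - U s := by
  have h1 : (0:ℝ) < (1 + s) ^ 3 := by positivity
  have hU := (hUb s hs).1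
  have h2 : U s ≤ M1 * s ^ 2 / (1 + s) ^ 3 := (abs_le.mp hU).2
  have h3 : M1 * s ^ 2 / (1 + s) ^ 3 ≤ M1 * s := by
    rw [div_le_iff₀ h1]
    have hkey : (1:ℝ) + s ≤ (1 + s) ^ 3 := by nlinarith [sq_nonneg s, sq_nonneg (1+s)]
    nlinarith [mul_le_mul_of_nonneg_left hkey (mul_nonneg hM1.le hs.le)]
  nlinarith

private lemma fInt_bound (hd : 1 ≤ d) (hM1 : 0 < M1) (hM1' : M1 < 1/2)
    (hUb : ∀ r > 0, |U r| ≤ M1 * r ^ 2 / (1 + r) ^ 3 ∧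
                    |deriv U r| ≤ M1 * r / (1 + r) ^ 3)
    {s : ℝ} (hs : 0 < s) :
    |fInt d U s| ≤ 2 * ((d : ℝ) * M1 / (1 - 2 * M1)) / (1 + s) ^ 3 := by
  have h1 : (0:ℝ) < (1 + s) ^ 3 := by positivity
  have h2M : (0:ℝ) < 1 - 2 * M1 := by linarith
  have hd1 : (1:ℝ) ≤ (d:ℝ) := by exact_mod_cast hd
  have hD := denom_pos hM1 hM1' hUb hs
  have hDpos : 0 < s / 2 - U s := lt_of_lt_of_le (by positivity) hD
  have hN : |deriv U s + ((d : ℝ) - 1) * U s / s| ≤ (d : ℝ) * M1 * s / (1 + s) ^ 3 := by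
    have h4 : |((d : ℝ) - 1) * U s / s| ≤ ((d:ℝ) - 1) * (M1 * s ^ 2 / (1 + s) ^ 3) / s := by
      rw [abs_div, abs_mul, abs_of_pos hs, abs_of_nonneg (by linarith : (0:ℝ) ≤ (d:ℝ) - 1)]
      gcongr
      · exact (hUb s hs).1
    calc |deriv U s + ((d : ℝ) - 1) * U s / s|
        ≤ |deriv U s| + |((d : ℝ) - 1) * U s / s| := abs_add_le _ _
      _ ≤ M1 * s / (1 + s) ^ 3 + ((d:ℝ) - 1) * (M1 * s ^ 2 / (1 + s) ^ 3) / s :=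
          add_le_add (hUb s hs).2 h4
      _ = (d : ℝ) * M1 * s / (1 + s) ^ 3 := by field_simp; ring
  rw [fInt, abs_div, abs_of_pos hDpos]
  calc |deriv U s + ((d : ℝ) - 1) * U s / s| / (s / 2 - U s)
      ≤ ((d : ℝ) * M1 * s / (1 + s) ^ 3) / (s * (1 - 2 * M1) / 2) := by
        apply div_le_div₀ (by positivity) hN (by positivity) hD
    _ = 2 * ((d : ℝ) * M1 / (1 - 2 * M1)) / (1 + s) ^ 3 := by
        field_simp

private lemma gBound_hasDeriv (M0 : ℝ) {s : ℝ} (hs : -1 < s) :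
    HasDerivAt (fun t => -M0 / (1 + t) ^ 2) (2 * M0 / (1 + s) ^ 3) s := by
  have h0 : (1 + s) ≠ 0 := by linarith
  have h : HasDerivAt (fun t : ℝ => (1 + t) ^ 2) (2 * (1 + s)) s := by
    have := ((hasDerivAt_id s).const_add 1).fun_pow 2
    simpa using this
  have h2 : HasDerivAt (fun t : ℝ => ((1 + t) ^ 2)⁻¹)
      (-(2 * (1 + s)) / ((1 + s) ^ 2) ^ 2) s := h.inv (pow_ne_zero 2 h0)
  have h3 := h2.const_mul (-M0)
  have heq : (fun t : ℝ => -M0 / (1 + t) ^ 2) = fun t => -M0 * ((1 + t) ^ 2)⁻¹ := by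
    funext t; rw [div_eq_mul_inv]
  rw [heq]
  refine h3.congr_deriv ?_
  field_simp

end aux

/-- Bounds on the density: `|V(r)| ≤ M₀`, `e^{−M₀}P₀ ≤ P(r) ≤ e^{M₀}P₀`
and `|P'(r)| ≤ 2M₀e^{M₀}P₀/(1+r)³`, with `M₀ = dM₁/(1−2M₁)`. -/
theorem density_bounds
    (d : ℕ) (hd : 1 ≤ d) (P0 M1 : ℝ) (hP0 : 0 < P0)
    (hM1 : 0 < M1) (hM1' : M1 < 1/2)
    (U : ℝ → ℝ) (hU : ContDiffOn ℝ 1 U (Ioi 0))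
    (hUb : ∀ r > 0, |U r| ≤ M1 * r ^ 2 / (1 + r) ^ 3 ∧
                    |deriv U r| ≤ M1 * r / (1 + r) ^ 3) :
    ∀ r > 0,
      |Vint d U r| ≤ (d : ℝ) * M1 / (1 - 2 * M1) ∧
      Real.exp (-((d : ℝ) * M1 / (1 - 2 * M1))) * P0 ≤ Pfun d P0 U r ∧
      Pfun d P0 U r ≤ Real.exp ((d : ℝ) * M1 / (1 - 2 * M1)) * P0 ∧
      |deriv (Pfun d P0 U) r| ≤
        2 * ((d : ℝ) * M1 / (1 - 2 * M1)) *
          Real.exp ((d : ℝ) * M1 / (1 - 2 * M1)) * P0 / (1 + r) ^ 3 := by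
  set M0 : ℝ := (d : ℝ) * M1 / (1 - 2 * M1) with hM0def
  have h2M : (0:ℝ) < 1 - 2 * M1 := by linarith
  have hd1 : (1:ℝ) ≤ (d:ℝ) := by exact_mod_cast hd
  have hM0 : 0 < M0 := by positivity
  -- continuity of the integrand on Ioi 0
  have hDpos : ∀ s ∈ Ioi (0:ℝ), s / 2 - U s ≠ 0 := fun s hs => by
    have hs' : (0:ℝ) < s := hs
    have := denom_pos hM1 hM1' hUb hs'
    have : (0:ℝ) < s / 2 - U s := lt_of_lt_of_le (by positivity) this
    exact this.ne'
  have hUc : ContinuousOn U (Ioi (0:ℝ)) := hU.continuousOn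
  have hU'c : ContinuousOn (deriv U) (Ioi (0:ℝ)) :=
    hU.continuousOn_deriv_of_isOpen isOpen_Ioi le_rfl
  have hfc : ContinuousOn (fInt d U) (Ioi (0:ℝ)) := by
    apply ContinuousOn.div
    · exact hU'c.add (((continuousOn_const.mul hUc).div continuousOn_id) (fun s hs => ne_of_gt hs))
    · exact (continuousOn_id.div_const 2).sub hUc
    · exact hDpos
  -- interval integrability of the integrand on [0, r] for r > 0
  have hfi : ∀ r > 0, IntervalIntegrable (fInt d U) volume 0 r := by
    intro r hr
    rw [intervalIntegrable_iff, uIoc_of_le hr.le]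
    apply Integrable.mono' (g := fun _ => 2 * M0)
    · exact integrableOn_const measure_Ioc_lt_top.ne
    · exact (hfc.mono Ioc_subset_Ioi_self).aestronglyMeasurable measurableSet_Ioc
    · filter_upwards [ae_restrict_mem measurableSet_Ioc] with s hs
      have h1 : (1:ℝ) ≤ (1 + s) ^ 3 := by nlinarith [hs.1.le, sq_nonneg s]
      calc ‖fInt d U s‖ ≤ 2 * M0 / (1 + s) ^ 3 := fInt_bound hd hM1 hM1' hUb hs.1
        _ ≤ 2 * M0 := by
            rw [div_le_iff₀ (by positivity)]
            nlinarith [mul_le_mul_of_nonneg_left h1 (by positivity : (0:ℝ) ≤ 2 * M0)]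
  -- bound on Vint
  have hV : ∀ r > 0, |Vint d U r| ≤ M0 := by
    intro r hr
    have hIg : ∀ s ∈ uIcc (0:ℝ) r, HasDerivAt (fun t => -M0 / (1 + t) ^ 2)
        (2 * M0 / (1 + s) ^ 3) s := by
      intro s hs
      rw [uIcc_of_le hr.le] at hs
      exact gBound_hasDeriv M0 (by linarith [hs.1])
    have hgcont : ContinuousOn (fun s => 2 * M0 / (1 + s) ^ 3) (uIcc (0:ℝ) r) := by
      apply continuousOn_const.div (by fun_prop)
      intro s hs
      rw [uIcc_of_le hr.le] at hs
      have : (0:ℝ) < 1 + s := by linarith [hs.1]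
      positivity
    have hgint : IntervalIntegrable (fun s => 2 * M0 / (1 + s) ^ 3) volume 0 r :=
      hgcont.intervalIntegrable
    have hval : (∫ s in (0:ℝ)..r, 2 * M0 / (1 + s) ^ 3)
        = -M0 / (1 + r) ^ 2 - -M0 / (1 + 0) ^ 2 :=
      intervalIntegral.integral_eq_sub_of_hasDerivAt hIg hgint
    have hle : ‖Vint d U r‖ ≤ |∫ s in (0:ℝ)..r, 2 * M0 / (1 + s) ^ 3| := by
      apply intervalIntegral.norm_integral_le_abs_of_norm_le _ hgint
      rw [uIoc_of_le hr.le]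
      filter_upwards [ae_restrict_mem measurableSet_Ioc] with s hs
      exact fInt_bound hd hM1 hM1' hUb hs.1
    rw [Real.norm_eq_abs] at hle
    refine hle.trans ?_
    have h1 : (0:ℝ) < (1 + r) ^ 2 := by positivity
    have heq2 : -M0 / (1 + r) ^ 2 - -M0 / (1 + 0) ^ 2 = M0 - M0 / (1 + r) ^ 2 := by
      norm_num; ring
    have h2 : M0 / (1 + r) ^ 2 ≤ M0 := by
      rw [div_le_iff₀ h1]
      nlinarith [mul_le_mul_of_nonneg_left (show (1:ℝ) ≤ (1+r)^2 by nlinarith) hM0.le]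
    have h3 : 0 ≤ M0 / (1 + r) ^ 2 := by positivity
    rw [hval, heq2, abs_of_nonneg (by linarith)]
    linarith
  intro r hr
  refine ⟨hV r hr, ?_, ?_, ?_⟩
  · rw [Pfun]
    have := (abs_le.mp (hV r hr)).1
    have := Real.exp_le_exp.mpr this
    nlinarith [Real.exp_pos (Vint d U r), Real.exp_pos (-M0)]
  · rw [Pfun]
    have := (abs_le.mp (hV r hr)).2
    have := Real.exp_le_exp.mpr this
    nlinarith [Real.exp_pos (Vint d U r)]
  · -- derivative bound
    have hVd : HasDerivAt (Vint d U) (fInt d U r) r := by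
      apply intervalIntegral.integral_hasDerivAt_right (hfi r hr)
      · exact hfc.stronglyMeasurableAtFilter isOpen_Ioi r hr
      · exact hfc.continuousAt (isOpen_Ioi.mem_nhds hr)
    have hPd : HasDerivAt (Pfun d P0 U) (P0 * Real.exp (Vint d U r) * fInt d U r) r := by
      have := (hVd.exp).const_mul P0
      exact (by simpa [mul_assoc] using this : HasDerivAt (fun y => P0 * Real.exp (Vint d U y)) (P0 * Real.exp (Vint d U r) * fInt d U r) r)
    rw [hPd.deriv]
    rw [abs_mul, abs_of_pos (by positivity : (0:ℝ) < P0 * Real.exp (Vint d U r))]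
    have hVle : Real.exp (Vint d U r) ≤ Real.exp M0 :=
      Real.exp_le_exp.mpr (abs_le.mp (hV r hr)).2
    calc P0 * Real.exp (Vint d U r) * |fInt d U r|
        ≤ P0 * Real.exp M0 * (2 * M0 / (1 + r) ^ 3) := by
          apply mul_le_mul (by gcongr) (fInt_bound hd hM1 hM1' hUb hr) (abs_nonneg _)
            (by positivity)
      _ = 2 * M0 * Real.exp M0 * P0 / (1 + r) ^ 3 := by ring
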